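/- arXiv:2602.05090 — 2 statements merged into one kernel-verified Lean document; each statement's English description precedes it below -/
import Mathlib

section
/- Fix α > 1/2 and define M_α(p) = ⌊√p / (log p)^α⌋. There exists a constant C_α > 0 such that for all sufficiently large X, the number of primes p ≤ X that are not M_α(p)-regular is at most C_α · X / (log X)^{2α}. -/
open Real

/-- A prime `p` is `m`-regular if `p ∤ num(B_{2k})` for all even `2 ≤ 2k ≤ min(m, p-3)`. -/
def IsMRegular (m p : ℕ) : Prop :=
  ∀ k : ℕ, 2 ≤ 2 * k → 2 * k ≤ min m (p - 3) → ¬ ((p : ℤ) ∣ (bernoulli (2 * k)).num)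

noncomputable def Mfloor (α : ℝ) (p : ℕ) : ℕ := ⌊Real.sqrt p / Real.log p ^ α⌋₊

section Aux
open Finset Nat

lemma bern_ne_zero {k : ℕ} (hk : k ≠ 0) : bernoulli (2 * k) ≠ 0 := by
  intro h
  have hs := hasSum_zeta_nat hk
  rw [h] at hs
  push_cast at hs
  simp only [mul_zero, zero_mul, zero_div] at hs
  have h1 : (fun n : ℕ => 1 / (n : ℝ) ^ (2 * k)) 1 ≤ 0 := by
    have := Summable.le_tsum hs.summable 1 (fun j _ => by positivity)
    rwa [hs.tsum_eq] at this
  norm_num at h1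


lemma geom_half (n : ℕ) : ∑ k ∈ range n, ((1:ℚ)/2) ^ (n - k) ≤ 1 := by
  have hre : ∑ k ∈ range n, ((1:ℚ)/2) ^ (n - k) = ∑ j ∈ range n, ((1:ℚ)/2) ^ (j+1) := by
    rw [← Finset.sum_range_reflect (fun j => ((1:ℚ)/2) ^ (j+1)) n]
    apply Finset.sum_congr rfl
    intro k hk; simp only [Finset.mem_range] at hk
    congr 1; omega
  rw [hre]
  have h2 : ∑ j ∈ range n, ((1:ℚ)/2) ^ j ≤ 2 := by
    rw [geom_sum_eq (by norm_num : ((1:ℚ)/2) ≠ 1)]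
    have : (0:ℚ) ≤ ((1:ℚ)/2)^n := by positivity
    rw [div_le_iff_of_neg (by norm_num : ((1:ℚ)/2 - 1) < 0)]
    linarith
  calc ∑ j ∈ range n, ((1:ℚ)/2) ^ (j+1) = (1/2) * ∑ j ∈ range n, ((1:ℚ)/2) ^ j := by
        rw [Finset.mul_sum]; apply Finset.sum_congr rfl; intro j _; ring
    _ ≤ (1/2) * 2 := by linarith
    _ = 1 := by norm_num

lemma bern_abs_le (n : ℕ) : |bernoulli n| ≤ (n ! : ℚ) := by
  induction n using Nat.strong_induction_on with
  | _ n ih =>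
    match n with
    | 0 => simp [bernoulli_zero]
    | 1 => rw [bernoulli_one]; rw [abs_of_nonpos (by norm_num)]; norm_num
    | (m+2) =>
      have hs := sum_bernoulli (m+3)
      rw [if_neg (by omega)] at hs
      rw [Finset.sum_range_succ] at hs
      have hchoose : ((m+3).choose (m+2) : ℚ) = (m+3 : ℚ) := by
        rw [Nat.choose_succ_self_right]; push_cast; ring
      rw [hchoose] at hs
      have hb : bernoulli (m+2) = -(∑ k ∈ range (m+2), ((m+3).choose k : ℚ) * bernoulli k) / (m+3) := by
        field_simp
        linarith [hs]
      rw [hb, abs_div, abs_neg, abs_of_pos (by positivity : (0:ℚ) < (m:ℚ)+3)]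
      rw [div_le_iff₀ (by positivity)]
      calc |∑ k ∈ range (m+2), ((m+3).choose k : ℚ) * bernoulli k|
          ≤ ∑ k ∈ range (m+2), |((m+3).choose k : ℚ) * bernoulli k| := Finset.abs_sum_le_sum_abs _ _
        _ ≤ ∑ k ∈ range (m+2), ((m+3).choose k : ℚ) * (k !) := by
            apply Finset.sum_le_sum
            intro k hk
            rw [abs_mul, abs_of_nonneg (by positivity)]
            exact mul_le_mul_of_nonneg_left (ih k (by simp at hk; omega)) (by positivity)
        _ ≤ ∑ k ∈ range (m+2), ((m+3)! : ℚ) * ((1:ℚ)/2) ^ (m+2-k) := by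
            apply Finset.sum_le_sum
            intro k hk
            simp only [Finset.mem_range] at hk
            have h1 : ((m+3).choose k : ℚ) * (k !) * ((m+3-k)! : ℚ) = ((m+3)! : ℚ) := by
              rw [← Nat.cast_mul, ← Nat.cast_mul]
              exact_mod_cast congrArg (Nat.cast (R := ℚ))
                (Nat.choose_mul_factorial_mul_factorial (by omega : k ≤ m+3))
            have h2 : (2:ℚ) ^ (m+2-k) ≤ ((m+3-k)! : ℚ) := by
              have hn : 2 ^ (m+2-k) ≤ (m+3-k)! := by
                have := Nat.factorial_mul_pow_le_factorial (m := 1) (n := m+2-k)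
                simp only [Nat.factorial_one, one_mul] at this
                have he : 1 + (m+2-k) = m+3-k := by omega
                rwa [he] at this
              exact_mod_cast hn
            have hone : (1:ℚ) ≤ ((m+3-k)! : ℚ) * ((1:ℚ)/2) ^ (m+2-k) := by
              rw [one_div, inv_pow, ← div_eq_mul_inv, le_div_iff₀ (by positivity)]
              simpa using h2
            calc ((m+3).choose k : ℚ) * (k !) = ((m+3).choose k : ℚ) * (k !) * 1 := by ring
              _ ≤ ((m+3).choose k : ℚ) * (k !) * (((m+3-k)! : ℚ) * ((1:ℚ)/2) ^ (m+2-k)) := by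
                  apply mul_le_mul_of_nonneg_left hone (by positivity)
              _ = ((m+3)! : ℚ) * ((1:ℚ)/2) ^ (m+2-k) := by rw [← mul_assoc, h1]
        _ = ((m+3)! : ℚ) * ∑ k ∈ range (m+2), ((1:ℚ)/2) ^ (m+2-k) := by rw [Finset.mul_sum]
        _ ≤ ((m+3)! : ℚ) * 1 := by
            apply mul_le_mul_of_nonneg_left (geom_half _) (by positivity)
        _ = ((m+2)! : ℚ) * ((m:ℚ)+3) := by
            rw [mul_one, show m+3 = (m+2)+1 from rfl, Nat.factorial_succ]
            push_cast; ring


lemma bern_int (n : ℕ) : ∃ z : ℤ, ((n+1)! : ℚ) * bernoulli n = z := by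
  induction n using Nat.strong_induction_on with
  | _ n ih =>
    match n with
    | 0 => exact ⟨1, by simp [bernoulli_zero]⟩
    | 1 => exact ⟨-1, by rw [bernoulli_one]; norm_num [Nat.factorial]⟩
    | (m+2) =>
      have key : ∀ k, k < m+2 → ∃ z : ℤ, ((m+2)! : ℚ) * bernoulli k = z := by
        intro k hk
        obtain ⟨z, hz⟩ := ih k hk
        obtain ⟨d, hd⟩ := Nat.factorial_dvd_factorial (by omega : k+1 ≤ m+2)
        refine ⟨d * z, ?_⟩
        rw [hd]
        push_cast
        rw [← hz]; push_cast; ring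
      have hs := sum_bernoulli (m+3)
      rw [if_neg (by omega), Finset.sum_range_succ] at hs
      have hchoose : ((m+3).choose (m+2) : ℚ) = (m+3 : ℚ) := by
        rw [Nat.choose_succ_self_right]; push_cast; ring
      rw [hchoose] at hs
      -- (m+3)! * B_{m+2} = (m+2)! * ((m+3) * B_{m+2}) = -(m+2)! * Σ
      refine ⟨-∑ k ∈ range (m+2), ((m+3).choose k : ℤ) * (((m+2)! : ℚ) * bernoulli k).num, ?_⟩
      have hterm : ∀ k ∈ range (m+2),
          ((m+3).choose k : ℚ) * ((((m+2)! : ℚ) * bernoulli k).num : ℚ)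
            = ((m+3).choose k : ℚ) * (((m+2)! : ℚ) * bernoulli k) := by
        intro k hk
        simp only [Finset.mem_range] at hk
        obtain ⟨z, hz⟩ := key k hk
        rw [hz]
        norm_num
      have hfac : ((m+3)! : ℚ) = ((m+2)! : ℚ) * ((m:ℚ)+3) := by
        rw [show m+3 = (m+2)+1 from rfl, Nat.factorial_succ]; push_cast; ring
      push_cast
      rw [Finset.sum_congr rfl hterm, hfac]
      have : ((m:ℚ)+3) * bernoulli (m+2) = -∑ x ∈ range (m+2), ((m+3).choose x : ℚ) * bernoulli x := by
        linarith [hs]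
      rw [mul_assoc, this, mul_neg, Finset.mul_sum, neg_inj]
      apply Finset.sum_congr rfl
      intro k _; ring

lemma bern_den_dvd (n : ℕ) : ((bernoulli n).den : ℤ) ∣ ((n+1)! : ℤ) := by
  obtain ⟨z, hz⟩ := bern_int n
  have hb : bernoulli n = (z : ℚ) / ((n+1)! : ℚ) := by
    rw [eq_div_iff (by positivity : ((n+1)! : ℚ) ≠ 0)]
    rw [← hz]; ring
  have : bernoulli n = Rat.divInt z ((n+1)! : ℤ) := by
    rw [Rat.divInt_eq_div, hb]; push_cast; ring
  rw [this]
  exact Rat.den_dvd z _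

lemma bern_num_le (n : ℕ) : (bernoulli n).num.natAbs ≤ (n+1) ^ (2*(n+1)) := by
  have h1 : |((bernoulli n).num : ℚ)| ≤ (n ! : ℚ) * ((n+1)! : ℚ) := by
    have hq : ((bernoulli n).num : ℚ) = bernoulli n * ((bernoulli n).den : ℚ) := by
      rw [Rat.mul_den_eq_num]
    rw [hq, abs_mul, abs_of_nonneg (by positivity : (0:ℚ) ≤ ((bernoulli n).den : ℚ))]
    have hden : ((bernoulli n).den : ℚ) ≤ ((n+1)! : ℚ) := by
      have := Int.le_of_dvd (by positivity) (bern_den_dvd n)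
      exact_mod_cast this
    exact mul_le_mul (bern_abs_le n) hden (by positivity) (by positivity)
  have h2 : (bernoulli n).num.natAbs ≤ n ! * (n+1)! := by
    have hz : |(bernoulli n).num| ≤ ((n ! * (n+1)! : ℕ) : ℤ) := by
      have h1' : |((bernoulli n).num : ℚ)| ≤ ((n ! * (n+1)! : ℕ) : ℚ) := by push_cast; push_cast at h1; linarith
      exact_mod_cast h1'
    rw [Int.abs_eq_natAbs] at hz
    exact_mod_cast hz
  calc (bernoulli n).num.natAbs ≤ n ! * (n+1)! := h2
    _ ≤ (n+1)! * (n+1)! := Nat.mul_le_mul_right _ (Nat.factorial_le (by omega))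
    _ ≤ ((n+1)^(n+1)) * ((n+1)^(n+1)) := Nat.mul_le_mul (Nat.factorial_le_pow _) (Nat.factorial_le_pow _)
    _ = (n+1) ^ (2*(n+1)) := by rw [← pow_add]; ring_nf

lemma bern_ne_zero' {k : ℕ} (hk : k ≠ 0) : (bernoulli (2*k)).num ≠ 0 :=
  Rat.num_ne_zero.mpr (bern_ne_zero hk)

lemma card_Pk (B k : ℕ) (hk : 1 ≤ k) :
    ((Finset.range B).filter
      (fun p => p.Prime ∧ 4*k^2 < p ∧ (p:ℤ) ∣ (bernoulli (2*k)).num)).card ≤ 4*k+2 := by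
  set s := (Finset.range B).filter
      (fun p => p.Prime ∧ 4*k^2 < p ∧ (p:ℤ) ∣ (bernoulli (2*k)).num) with hsdef
  set N := (bernoulli (2*k)).num.natAbs with hN
  have hN0 : N ≠ 0 := fun h => bern_ne_zero' (by omega) (Int.natAbs_eq_zero.mp h)
  have hmem : ∀ p ∈ s, p.Prime ∧ 4*k^2 < p ∧ p ∣ N := by
    intro p hp
    simp only [hsdef, Finset.mem_filter] at hp
    exact ⟨hp.2.1, hp.2.2.1, by
      have := hp.2.2.2
      rw [← Int.natAbs_dvd_natAbs] at this
      simpa using this⟩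
  have hprod : (∏ p ∈ s, p) ∣ N :=
    Finset.prod_primes_dvd N (fun p hp => (hmem p hp).1.prime) (fun p hp => (hmem p hp).2.2)
  have hle : (∏ p ∈ s, p) ≤ N := Nat.le_of_dvd (Nat.pos_of_ne_zero hN0) hprod
  have hpow : (4*k^2) ^ s.card ≤ ∏ p ∈ s, p := by
    rw [← Finset.prod_const]
    exact Finset.prod_le_prod' (fun p hp => le_of_lt (hmem p hp).2.1)
  have hNle : N ≤ (2*k+1) ^ (4*k+2) := by
    have := bern_num_le (2*k)
    calc N ≤ (2*k+1) ^ (2*(2*k+1)) := this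
      _ = (2*k+1) ^ (4*k+2) := by ring_nf
  have hchain : (2*k) ^ (2 * s.card) ≤ (2*k) ^ (2*(4*k+2)) := by
    calc (2*k) ^ (2 * s.card) = ((2*k)^2) ^ s.card := by rw [← pow_mul]
      _ = (4*k^2) ^ s.card := by ring_nf
      _ ≤ N := le_trans hpow hle
      _ ≤ (2*k+1) ^ (4*k+2) := hNle
      _ ≤ ((2*k)^2) ^ (4*k+2) := Nat.pow_le_pow_left (show 2*k+1 ≤ (2*k)^2 by nlinarith) (4*k+2)
      _ = (2*k) ^ (2*(4*k+2)) := by rw [← pow_mul]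
  have := (Nat.pow_le_pow_iff_right (by omega : 2 ≤ 2*k)).mp hchain
  omega

end Aux

open Classical in
theorem stmt_14 (α : ℝ) (hα : 1 / 2 < α) :
    ∃ C : ℝ, 0 < C ∧ ∃ X₀ : ℝ, ∀ X : ℝ, X₀ ≤ X →
      (((Finset.range (⌊X⌋₊ + 1)).filter
          (fun p : ℕ => p.Prime ∧ (p : ℝ) ≤ X ∧ ¬ IsMRegular (Mfloor α p) p)).card : ℝ) ≤
        C * X / Real.log X ^ (2 * α) := by
  have hαpos : (0:ℝ) < α := by linarith
  refine ⟨6*(2:ℝ)^(2*α) + 1, by positivity, ?_⟩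
  have hev : ∀ᶠ X : ℝ in Filter.atTop, Real.log X ^ (2*α) ≤ (1/4) * X ^ ((1:ℝ)/2) := by
    have hlo := isLittleO_log_rpow_rpow_atTop (2*α) (by norm_num : (0:ℝ) < 1/2)
    filter_upwards [hlo.def (by norm_num : (0:ℝ) < 1/4), Filter.eventually_ge_atTop (1:ℝ)]
      with X hX hX1
    rwa [Real.norm_eq_abs, Real.norm_eq_abs,
      abs_of_nonneg (rpow_nonneg (log_nonneg hX1) _),
      abs_of_nonneg (rpow_nonneg (by linarith) _)] at hX
  obtain ⟨X₀, hX₀⟩ := Filter.eventually_atTop.mp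
    (hev.and (Filter.eventually_ge_atTop (Real.exp 4)))
  refine ⟨X₀, fun X hX => ?_⟩
  obtain ⟨hevX, hXe4⟩ := hX₀ X hX
  have hX1 : (1:ℝ) ≤ X := le_trans (by nlinarith [Real.exp_pos 4, Real.add_one_le_exp 4]) hXe4
  have hX0 : (0:ℝ) ≤ X := by linarith
  set L := Real.log X with hL
  have hL4 : 4 ≤ L := by
    rw [hL, ← Real.log_exp 4]
    exact Real.log_le_log (Real.exp_pos _) hXe4
  have hLpos : 0 < L := by linarith
  have hLpow : 0 < L ^ (2*α) := Real.rpow_pos_of_pos hLpos _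
  have hsqX : Real.exp 2 ≤ Real.sqrt X := by
    have h : (Real.exp 2)^2 ≤ X := by
      rw [sq, ← Real.exp_add]; norm_num; linarith
    calc Real.exp 2 = Real.sqrt ((Real.exp 2)^2) := (Real.sqrt_sq (Real.exp_pos 2).le).symm
      _ ≤ Real.sqrt X := Real.sqrt_le_sqrt h
  have hsq1 : (1:ℝ) ≤ Real.sqrt X :=
    le_trans (by nlinarith [Real.add_one_le_exp 2]) hsqX
  set S := (Finset.range (⌊X⌋₊ + 1)).filter
      (fun p : ℕ => p.Prime ∧ (p : ℝ) ≤ X ∧ ¬ IsMRegular (Mfloor α p) p) with hS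
  set S₁ := S.filter (fun p : ℕ => (p:ℝ) ≤ Real.sqrt X) with hS₁
  set S₂ := S.filter (fun p : ℕ => ¬ ((p:ℝ) ≤ Real.sqrt X)) with hS₂
  have hsplit : S₁.card + S₂.card = S.card :=
    Finset.card_filter_add_card_filter_not _
  -- bound on S₁
  have hcard1 : (S₁.card : ℝ) ≤ Real.sqrt X + 1 := by
    have hsub : S₁ ⊆ Finset.range (⌊Real.sqrt X⌋₊ + 1) := by
      intro p hp
      rw [hS₁, Finset.mem_filter] at hp
      rw [Finset.mem_range, Nat.lt_succ_iff]
      exact Nat.le_floor hp.2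
    have := Finset.card_le_card hsub
    rw [Finset.card_range] at this
    calc (S₁.card : ℝ) ≤ ((⌊Real.sqrt X⌋₊ + 1 : ℕ) : ℝ) := by exact_mod_cast this
      _ ≤ Real.sqrt X + 1 := by
          push_cast
          have := Nat.floor_le (Real.sqrt_nonneg X)
          linarith
  -- bound on S₂
  set K' := ⌊(2:ℝ)^α * Real.sqrt X / L^α⌋₊ with hK'
  have hKnn : (0:ℝ) ≤ (2:ℝ)^α * Real.sqrt X / L^α :=
    div_nonneg (mul_nonneg (rpow_nonneg (by norm_num) _) (Real.sqrt_nonneg _))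
      (rpow_nonneg hLpos.le _)
  have hsub2 : S₂ ⊆ (Finset.Icc 1 K').biUnion (fun k =>
      (Finset.range (⌊X⌋₊ + 1)).filter
        (fun p => p.Prime ∧ 4*k^2 < p ∧ (p:ℤ) ∣ (bernoulli (2*k)).num)) := by
    intro p hp
    rw [hS₂, Finset.mem_filter] at hp
    obtain ⟨hpS, hps⟩ := hp
    rw [hS, Finset.mem_filter] at hpS
    obtain ⟨hprange, hppr, hpX, hirr⟩ := hpS
    rw [IsMRegular] at hirr
    push_neg at hirr
    obtain ⟨k, hk2, hkmin, hdvd⟩ := hirr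
    have hk1 : 1 ≤ k := by omega
    have hkM : 2*k ≤ Mfloor α p := le_trans hkmin (min_le_left _ _)
    have hplarge : Real.sqrt X < (p:ℝ) := not_le.mp hps
    have hppos : (0:ℝ) < p := lt_of_le_of_lt (Real.sqrt_nonneg X) hplarge
    have hlogp2 : 2 ≤ Real.log p := by
      rw [← Real.log_exp 2]
      exact Real.log_le_log (Real.exp_pos _) (le_trans hsqX hplarge.le)
    have hlogpL : L/2 ≤ Real.log p := by
      have h1 : Real.log (Real.sqrt X) ≤ Real.log p :=
        Real.log_le_log (lt_of_lt_of_le (by positivity) hsqX) hplarge.le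
      rwa [Real.log_sqrt hX0] at h1
    have hMle : (Mfloor α p : ℝ) ≤ Real.sqrt p / Real.log p ^ α :=
      Nat.floor_le (div_nonneg (Real.sqrt_nonneg _) (rpow_nonneg (by linarith) _))
    have h2k : (2*k : ℝ) ≤ Real.sqrt p / Real.log p ^ α := by
      calc (2*k : ℝ) ≤ (Mfloor α p : ℝ) := by exact_mod_cast hkM
        _ ≤ _ := hMle
    -- p > 4k²
    have hgt1 : 1 < Real.log p ^ α :=
      Real.one_lt_rpow_iff_of_pos (by linarith) |>.mpr (Or.inl ⟨by linarith, hαpos⟩)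
    have hsqp_pos : 0 < Real.sqrt p := Real.sqrt_pos.mpr hppos
    have h2ksqp : (2*k : ℝ) < Real.sqrt p :=
      lt_of_le_of_lt h2k (div_lt_self hsqp_pos hgt1)
    have hp4k2 : 4*k^2 < p := by
      have hsq : ((2*k:ℝ))^2 < (Real.sqrt p)^2 :=
        pow_lt_pow_left₀ h2ksqp (by positivity) (by norm_num)
      rw [Real.sq_sqrt hppos.le] at hsq
      exact_mod_cast (by push_cast; nlinarith [hsq] : ((4*k^2 : ℕ) : ℝ) < (p:ℝ))
    -- k ≤ K'
    have hkK : (k:ℝ) ≤ (2:ℝ)^α * Real.sqrt X / L^α := by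
      have hL2pos : (0:ℝ) < (L/2)^α := Real.rpow_pos_of_pos (by linarith) _
      have hrle : (L/2)^α ≤ Real.log p ^ α :=
        Real.rpow_le_rpow (by linarith) hlogpL hαpos.le
      have hchain : (2*k : ℝ) ≤ Real.sqrt X / (L/2)^α := by
        calc (2*k : ℝ) ≤ Real.sqrt p / Real.log p ^ α := h2k
          _ ≤ Real.sqrt X / (L/2)^α := by
              apply div_le_div₀ (Real.sqrt_nonneg X)
                (Real.sqrt_le_sqrt hpX) hL2pos hrle
      have heq : Real.sqrt X / ((L/2)^α) = (2:ℝ)^α * Real.sqrt X / L^α := by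
        rw [Real.div_rpow hLpos.le (by norm_num : (0:ℝ) ≤ 2)]
        have h2a : ((2:ℝ)^α) ≠ 0 := ne_of_gt (Real.rpow_pos_of_pos (by norm_num) _)
        have hLa : (L^α) ≠ 0 := ne_of_gt (Real.rpow_pos_of_pos hLpos _)
        field_simp
      rw [heq] at hchain
      have hknn : (0:ℝ) ≤ (k:ℝ) := Nat.cast_nonneg k
      have : (k:ℝ) ≤ ((2*k:ℕ):ℝ) := by push_cast; linarith
      push_cast at this hchain ⊢
      linarith
    refine Finset.mem_biUnion.mpr ⟨k, Finset.mem_Icc.mpr ⟨hk1, Nat.le_floor hkK⟩, ?_⟩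
    exact Finset.mem_filter.mpr ⟨hprange, hppr, hp4k2, hdvd⟩
  have hcard2 : S₂.card ≤ 6*K'^2 := by
    calc S₂.card ≤ ((Finset.Icc 1 K').biUnion _).card := Finset.card_le_card hsub2
      _ ≤ ∑ k ∈ Finset.Icc 1 K', ((Finset.range (⌊X⌋₊ + 1)).filter
            (fun p => p.Prime ∧ 4*k^2 < p ∧ (p:ℤ) ∣ (bernoulli (2*k)).num)).card :=
          Finset.card_biUnion_le
      _ ≤ ∑ k ∈ Finset.Icc 1 K', (6*K') := by
          apply Finset.sum_le_sum
          intro k hk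
          rw [Finset.mem_Icc] at hk
          calc _ ≤ 4*k+2 := card_Pk _ k hk.1
            _ ≤ 6*K' := by omega
      _ = K' * (6*K') := by rw [Finset.sum_const, Nat.card_Icc]; simp [Nat.smul_one_eq_cast]
      _ ≤ 6*K'^2 := by ring_nf; omega
  -- assemble
  have hKfloor : (K' : ℝ) ≤ (2:ℝ)^α * Real.sqrt X / L^α := Nat.floor_le hKnn
  have hid : ((2:ℝ)^α * Real.sqrt X / L^α)^2 * L^(2*α) = (2:ℝ)^(2*α) * X := by
    have e1 : ((2:ℝ)^α)^2 = (2:ℝ)^(2*α) := by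
      rw [sq, ← Real.rpow_add (by norm_num : (0:ℝ) < 2)]; ring_nf
    have e2 : (L^α)^2 = L^(2*α) := by
      rw [sq, ← Real.rpow_add hLpos]; ring_nf
    have hLa : (L^α) ≠ 0 := ne_of_gt (Real.rpow_pos_of_pos hLpos _)
    calc ((2:ℝ)^α * Real.sqrt X / L^α)^2 * L^(2*α)
        = ((2:ℝ)^α)^2 * (Real.sqrt X)^2 / (L^α)^2 * L^(2*α) := by ring
      _ = (2:ℝ)^(2*α) * X := by
          rw [e1, e2, Real.sq_sqrt hX0]
          field_simp [ne_of_gt hLpow]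
  rw [le_div_iff₀ hLpow]
  have hc1 : (S₁.card:ℝ) * L^(2*α) ≤ X := by
    calc (S₁.card:ℝ)*L^(2*α) ≤ (Real.sqrt X+1)*L^(2*α) :=
          mul_le_mul_of_nonneg_right hcard1 hLpow.le
      _ ≤ (2*Real.sqrt X)*((1/4)*X^((1:ℝ)/2)) :=
          mul_le_mul (by linarith) hevX hLpow.le (by positivity)
      _ = (1/2)*(Real.sqrt X*X^((1:ℝ)/2)) := by ring
      _ = (1/2)*X := by rw [← Real.sqrt_eq_rpow, Real.mul_self_sqrt hX0]
      _ ≤ X := by linarith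
  have hc2 : (S₂.card:ℝ)*L^(2*α) ≤ 6*(2:ℝ)^(2*α)*X := by
    have h1 : (S₂.card:ℝ) ≤ 6*(K':ℝ)^2 := by exact_mod_cast hcard2
    have h2 : ((K':ℝ))^2 * L^(2*α) ≤ (2:ℝ)^(2*α)*X := by
      rw [← hid]
      exact mul_le_mul_of_nonneg_right
        (pow_le_pow_left₀ (Nat.cast_nonneg K') hKfloor 2) hLpow.le
    calc (S₂.card:ℝ)*L^(2*α) ≤ 6*(K':ℝ)^2*L^(2*α) :=
          mul_le_mul_of_nonneg_right h1 hLpow.le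
      _ = 6*((K':ℝ)^2*L^(2*α)) := by ring
      _ ≤ 6*((2:ℝ)^(2*α)*X) := by linarith
      _ = 6*(2:ℝ)^(2*α)*X := by ring
  have hcards : (S.card : ℝ) = (S₁.card:ℝ) + (S₂.card:ℝ) := by exact_mod_cast hsplit.symm
  calc (S.card:ℝ)*L^(2*α) = (S₁.card:ℝ)*L^(2*α) + (S₂.card:ℝ)*L^(2*α) := by
        rw [hcards]; ring
    _ ≤ X + 6*(2:ℝ)^(2*α)*X := by linarith
    _ = (6*(2:ℝ)^(2*α)+1)*X := by ring
end

section
/- Fix α > 1/2 and define M_α(p) = ⌊√p / (log p)^α⌋. For all sufficiently large X, the number of primes p ≤ X that are not M_α(p)-regular is at most 10 · X / (log X)^{2α}; that is, the constant C_α = 10 works for every α > 1/2. -/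
open Real

open Finset in
/-- `(n+1)!` clears all denominators of `bernoulli k` for `k ≤ n`. -/
lemma bernoulli_factorial_int (n : ℕ) :
    ∃ g : ℕ → ℤ, ∀ k ≤ n, (g k : ℚ) = ((n + 1).factorial : ℚ) * bernoulli k := by
  induction n with
  | zero =>
    refine ⟨fun _ => 1, fun k hk => ?_⟩
    interval_cases k
    simp [bernoulli_zero]
  | succ n ih =>
    obtain ⟨g, hg⟩ := ih
    refine ⟨fun k => if k ≤ n then (n + 2) * g k
      else -∑ j ∈ range (n + 1), ((n + 2).choose j : ℤ) * g j, fun k hk => ?_⟩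
    by_cases h : k ≤ n
    · simp only [h, if_true]
      push_cast
      rw [hg k h]
      rw [show ((n + 1) + 1).factorial = (n + 2) * (n + 1).factorial from rfl]
      push_cast
      ring
    · have hk' : k = n + 1 := by omega
      subst hk'
      simp only [h, if_false]
      have hs := sum_bernoulli (n + 2)
      rw [if_neg (by omega)] at hs
      rw [Finset.sum_range_succ] at hs
      have hch : (n + 2).choose (n + 1) = n + 2 := by
        rw [Nat.choose_succ_self_right]
      rw [hch] at hs
      -- hs : ∑ j ∈ range (n+1), ((n+2).choose j : ℚ) * bernoulli j + (n+2) * bernoulli (n+1) = 0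
      have key : ((n + 2 : ℚ)) * bernoulli (n + 1)
          = -∑ j ∈ range (n + 1), ((n + 2).choose j : ℚ) * bernoulli j := by
        push_cast at hs ⊢
        linarith
      have : ((n + 1 + 1).factorial : ℚ) = ((n + 1).factorial : ℚ) * (n + 2) := by
        rw [show ((n + 1) + 1).factorial = (n + 2) * (n + 1).factorial from rfl]
        push_cast; ring
      rw [this, mul_assoc, key]
      push_cast
      rw [mul_neg, neg_inj, Finset.mul_sum]
      refine Finset.sum_congr rfl fun j hj => ?_
      rw [hg j (Nat.lt_succ_iff.mp (Finset.mem_range.mp hj))]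
      ring

lemma bernoulli_size {k : ℕ} (hk : 1 ≤ k) :
    bernoulli (2 * k) ≠ 0 ∧ |bernoulli (2 * k)| ≤ ((2 * k).factorial : ℚ) := by
  have hZ := hasSum_zeta_nat (k := k) (by omega)
  set Z : ℝ := (-1 : ℝ) ^ (k + 1) * (2 : ℝ) ^ (2 * k - 1) * π ^ (2 * k) *
        bernoulli (2 * k) / (2 * k).factorial with hZdef
  have h1 : (1 : ℝ) ≤ Z := by
    have := le_hasSum hZ 1 (fun j _ => by positivity)
    simpa using this
  have h2 : Z ≤ π ^ 2 / 6 := by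
    refine hasSum_le (fun n => ?_) hZ hasSum_zeta_two
    rcases Nat.eq_zero_or_pos n with rfl | hn
    · norm_num [zero_pow (show 2 * k ≠ 0 by omega)]
    · have hn1 : (1 : ℝ) ≤ (n : ℝ) := by exact_mod_cast hn
      have : (n : ℝ) ^ 2 ≤ (n : ℝ) ^ (2 * k) := pow_le_pow_right₀ hn1 (by omega)
      exact one_div_le_one_div_of_le (by positivity) this
  have hpi : π ^ 2 / 6 ≤ 2 := by nlinarith [pi_lt_d2, pi_pos]
  have hZabs : |Z| ≤ 2 := abs_le.mpr ⟨by linarith, by linarith⟩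
  have hF : (0 : ℝ) < ((2 * k).factorial : ℝ) := by positivity
  have hP : (2 : ℝ) ≤ (2 : ℝ) ^ (2 * k - 1) * π ^ (2 * k) := by
    have h21 : (2 : ℝ) ≤ (2 : ℝ) ^ (2 * k - 1) := by
      calc (2:ℝ) = 2 ^ 1 := (pow_one 2).symm
      _ ≤ 2 ^ (2 * k - 1) := pow_le_pow_right₀ one_le_two (by omega)
    have hπ1 : (1 : ℝ) ≤ π ^ (2 * k) := one_le_pow₀ (by nlinarith [pi_gt_three])
    nlinarith
  have habs : |Z| = (2 : ℝ) ^ (2 * k - 1) * π ^ (2 * k) * |(bernoulli (2 * k) : ℝ)|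
      / (2 * k).factorial := by
    rw [hZdef, abs_div, abs_mul, abs_mul, abs_mul, abs_pow, abs_neg, abs_one, one_pow,
      one_mul, abs_pow, abs_pow, abs_two, abs_of_pos pi_pos, Nat.abs_cast]
  have hBabs : |(bernoulli (2 * k) : ℝ)| ≤ ((2 * k).factorial : ℝ) := by
    rw [habs, div_le_iff₀ hF] at hZabs
    nlinarith [abs_nonneg ((bernoulli (2 * k) : ℝ))]
  constructor
  · intro h0
    rw [hZdef, h0] at h1
    norm_num at h1
  · have : ((|bernoulli (2 * k)| : ℚ) : ℝ) ≤ (((2 * k).factorial : ℚ) : ℝ) := by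
      push_cast
      rw [← Rat.cast_abs] at hBabs
      push_cast at hBabs
      exact hBabs
    exact_mod_cast this

/-- The numerator of `B_{2k}` is bounded by `(2k)! (2k+1)!`. -/
lemma bernoulli_num_le {k : ℕ} (hk : 1 ≤ k) :
    (bernoulli (2 * k)).num.natAbs ≤ (2 * k).factorial * (2 * k + 1).factorial := by
  obtain ⟨g, hg⟩ := bernoulli_factorial_int (2 * k)
  have hgk := hg (2 * k) le_rfl
  -- bernoulli (2k) = g (2k) / (2k+1)!
  have hfac0 : ((2 * k + 1).factorial : ℚ) ≠ 0 := by positivity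
  have hq : bernoulli (2 * k) = (g (2 * k) : ℚ) / ((2 * k + 1).factorial : ℚ) := by
    field_simp [hgk]
    rw [hgk]; ring
  have hdvd : (bernoulli (2 * k)).num ∣ g (2 * k) := by
    have : bernoulli (2 * k) = Rat.divInt (g (2 * k)) ((2 * k + 1).factorial : ℤ) := by
      rw [Rat.divInt_eq_div, hq]; push_cast; ring
    rw [this]
    exact Rat.num_dvd _ (by positivity)
  have hne : g (2 * k) ≠ 0 := by
    intro h0
    rw [h0] at hgk
    have := (bernoulli_size hk).1
    simp only [Int.cast_zero] at hgk
    exact this ((mul_eq_zero.mp hgk.symm).resolve_left hfac0)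
  have h1 : (bernoulli (2 * k)).num.natAbs ≤ (g (2 * k)).natAbs :=
    Nat.le_of_dvd (Int.natAbs_pos.mpr hne) (Int.natAbs_dvd_natAbs.mpr hdvd)
  have h2 : ((g (2 * k)).natAbs : ℚ) ≤ ((2 * k).factorial * (2 * k + 1).factorial : ℚ) := by
    have : ((g (2 * k)).natAbs : ℚ) = |(g (2 * k) : ℚ)| := by
      push_cast [Nat.cast_natAbs]; ring
    rw [this, hgk, abs_mul, abs_of_pos (by positivity : (0:ℚ) < ((2 * k + 1).factorial : ℚ))]
    have := (bernoulli_size hk).2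
    calc ((2 * k + 1).factorial : ℚ) * |bernoulli (2 * k)|
        ≤ ((2 * k + 1).factorial : ℚ) * ((2 * k).factorial : ℚ) :=
          mul_le_mul_of_nonneg_left this (by positivity)
      _ = _ := by push_cast; ring
  have h2' : (g (2 * k)).natAbs ≤ (2 * k).factorial * (2 * k + 1).factorial := by
    exact_mod_cast h2
  omega

/-- At most `6k` primes larger than `4k²` divide the numerator of `B_{2k}`. -/
lemma count_irregular {k : ℕ} (hk : 1 ≤ k) :
    ((bernoulli (2 * k)).num.natAbs.primeFactors.filter (fun p => 4 * k ^ 2 < p)).card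
      ≤ 6 * k := by
  set N := (bernoulli (2 * k)).num.natAbs with hN
  set T := N.primeFactors.filter (fun p => 4 * k ^ 2 < p) with hT
  have hN0 : N ≠ 0 := by
    simp only [hN, Int.natAbs_ne_zero, Rat.num_ne_zero]
    exact (bernoulli_size hk).1
  have hpow : (4 * k ^ 2 + 1) ^ T.card ≤ N := by
    calc (4 * k ^ 2 + 1) ^ T.card ≤ ∏ p ∈ T, p := by
          refine Finset.pow_card_le_prod _ _ _ fun p hp => ?_
          have := (Finset.mem_filter.mp hp).2
          omega
      _ ≤ N := by
          refine Nat.le_of_dvd (Nat.pos_of_ne_zero hN0) ?_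
          exact dvd_trans (Finset.prod_dvd_prod_of_subset _ _ _ (Finset.filter_subset _ _))
            (Nat.prod_primeFactors_dvd N)
  have hNle : N < (4 * k ^ 2 + 1) ^ (6 * k + 1) := by
    have h1 : N ≤ (2 * k).factorial * (2 * k + 1).factorial := bernoulli_num_le hk
    have h2 : (2 * k).factorial ≤ (4 * k ^ 2 + 1) ^ (2 * k) := by
      calc (2 * k).factorial ≤ (2 * k) ^ (2 * k) := Nat.factorial_le_pow _
        _ ≤ (4 * k ^ 2 + 1) ^ (2 * k) := Nat.pow_le_pow_left (by nlinarith) _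
    have h3 : (2 * k + 1).factorial ≤ (4 * k ^ 2 + 1) ^ (2 * k + 1) := by
      calc (2 * k + 1).factorial ≤ (2 * k + 1) ^ (2 * k + 1) := Nat.factorial_le_pow _
        _ ≤ (4 * k ^ 2 + 1) ^ (2 * k + 1) := Nat.pow_le_pow_left (by nlinarith) _
    calc N ≤ (2 * k).factorial * (2 * k + 1).factorial := h1
      _ ≤ (4 * k ^ 2 + 1) ^ (2 * k) * (4 * k ^ 2 + 1) ^ (2 * k + 1) :=
          Nat.mul_le_mul h2 h3
      _ = (4 * k ^ 2 + 1) ^ (4 * k + 1) := by rw [← pow_add]; ring_nf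
      _ < (4 * k ^ 2 + 1) ^ (6 * k + 1) :=
          Nat.pow_lt_pow_right (by nlinarith) (by omega)
  have := lt_of_le_of_lt hpow hNle
  have := (Nat.pow_lt_pow_iff_right (by nlinarith : 1 < 4 * k ^ 2 + 1)).mp this
  omega

lemma sqrt_div_log_mono {α a b : ℝ} (hα : 0 < α) (ha : Real.exp (2 * α) ≤ a) (hab : a ≤ b) :
    Real.sqrt a / Real.log a ^ α ≤ Real.sqrt b / Real.log b ^ α := by
  have ha0 : (0 : ℝ) < a := lt_of_lt_of_le (exp_pos _) ha
  have hb0 : (0 : ℝ) < b := lt_of_lt_of_le ha0 hab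
  have hla : 2 * α ≤ Real.log a := by
    rw [← Real.log_exp (2 * α)]
    exact Real.log_le_log (exp_pos _) ha
  have hla0 : 0 < Real.log a := lt_of_lt_of_le (by linarith) hla
  have hlb : Real.log a ≤ Real.log b := Real.log_le_log ha0 hab
  have hlb0 : 0 < Real.log b := lt_of_lt_of_le hla0 hlb
  have hpa : (0 : ℝ) < Real.log a ^ α := rpow_pos_of_pos hla0 _
  have hpb : (0 : ℝ) < Real.log b ^ α := rpow_pos_of_pos hlb0 _
  rw [div_le_div_iff₀ hpa hpb]
  have hsq_a : (0 : ℝ) < Real.sqrt a := Real.sqrt_pos.mpr ha0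
  have hsq_b : (0 : ℝ) < Real.sqrt b := Real.sqrt_pos.mpr hb0
  have hlog : Real.log (Real.sqrt a * Real.log b ^ α)
      ≤ Real.log (Real.sqrt b * Real.log a ^ α) := by
    rw [Real.log_mul (ne_of_gt hsq_a) (ne_of_gt hpb),
      Real.log_mul (ne_of_gt hsq_b) (ne_of_gt hpa),
      Real.log_sqrt ha0.le, Real.log_sqrt hb0.le,
      Real.log_rpow hla0, Real.log_rpow hlb0]
    have hkey : Real.log (Real.log b) - Real.log (Real.log a)
        ≤ (Real.log b - Real.log a) / Real.log a := by
      have h1 : Real.log (Real.log b / Real.log a) ≤ Real.log b / Real.log a - 1 :=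
        Real.log_le_sub_one_of_pos (by positivity)
      rw [Real.log_div (ne_of_gt hlb0) (ne_of_gt hla0)] at h1
      have : Real.log b / Real.log a - 1 = (Real.log b - Real.log a) / Real.log a := by
        field_simp
      linarith [this ▸ h1]
    have h2 : α * ((Real.log b - Real.log a) / Real.log a) ≤ (Real.log b - Real.log a) / 2 := by
      rw [← mul_div_assoc, div_le_div_iff₀ hla0 two_pos]
      nlinarith
    have h3 : α * (Real.log (Real.log b) - Real.log (Real.log a))
        ≤ α * ((Real.log b - Real.log a) / Real.log a) :=
      mul_le_mul_of_nonneg_left hkey hα.le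
    nlinarith
  calc Real.sqrt a * Real.log b ^ α
      = Real.exp (Real.log (Real.sqrt a * Real.log b ^ α)) :=
        (Real.exp_log (by positivity)).symm
    _ ≤ Real.exp (Real.log (Real.sqrt b * Real.log a ^ α)) := Real.exp_le_exp.mpr hlog
    _ = Real.sqrt b * Real.log a ^ α := Real.exp_log (by positivity)

/-- For `X ≥ exp ((8α+2)²)`, we have `exp α ≤ √X / (log X)^α`. -/
lemma exp_le_sqrt_div_log {α X : ℝ} (hα : 0 < α) (hX : Real.exp ((8 * α + 2) ^ 2) ≤ X) :
    Real.exp α ≤ Real.sqrt X / Real.log X ^ α := by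
  set t := (8 * α + 2) ^ 2 with ht
  have ht2α : 2 * α ≤ t := by nlinarith
  have h1 : Real.sqrt (Real.exp t) / Real.log (Real.exp t) ^ α
      ≤ Real.sqrt X / Real.log X ^ α :=
    sqrt_div_log_mono hα (Real.exp_le_exp.mpr ht2α) hX
  refine le_trans ?_ h1
  rw [Real.log_exp]
  have hsq : Real.sqrt (Real.exp t) = Real.exp (t / 2) := by
    rw [show Real.exp t = Real.exp (t / 2) ^ 2 by
      rw [sq, ← Real.exp_add]; ring_nf, Real.sqrt_sq (Real.exp_pos _).le]
  rw [hsq]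
  have ht0 : (0 : ℝ) < t := by nlinarith
  have htpow : t ^ α = Real.exp (α * Real.log t) := by
    rw [Real.rpow_def_of_pos ht0, mul_comm]
  rw [htpow, ← Real.exp_sub, Real.exp_le_exp]
  have hlogt : Real.log t ≤ 2 * (8 * α + 2) := by
    have h8 : (0:ℝ) < 8 * α + 2 := by linarith
    rw [ht, Real.log_pow]
    push_cast
    have := Real.log_le_sub_one_of_pos h8
    linarith
  have : α * Real.log t ≤ α * (2 * (8 * α + 2)) :=
    mul_le_mul_of_nonneg_left hlogt hα.le
  nlinarith

set_option maxHeartbeats 1000000 in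
open Classical in
theorem stmt_15 (α : ℝ) (hα : 1 / 2 < α) :
    ∃ X₀ : ℝ, ∀ X : ℝ, X₀ ≤ X →
      (((Finset.range (⌊X⌋₊ + 1)).filter
          (fun p : ℕ => p.Prime ∧ (p : ℝ) ≤ X ∧ ¬ IsMRegular (Mfloor α p) p)).card : ℝ) ≤
        10 * X / Real.log X ^ (2 * α) := by
  have hα0 : 0 < α := by linarith
  refine ⟨Real.exp ((8 * α + 2) ^ 2), fun X hX => ?_⟩
  have ht36 : (36 : ℝ) ≤ (8 * α + 2) ^ 2 := by nlinarith
  have hXpos : (0 : ℝ) < X := lt_of_lt_of_le (Real.exp_pos _) hX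
  have hLX : (8 * α + 2) ^ 2 ≤ Real.log X := by
    rw [← Real.log_exp ((8 * α + 2) ^ 2)]
    exact Real.log_le_log (Real.exp_pos _) hX
  set L := Real.log X with hL
  have hL1 : (1 : ℝ) < L := by linarith
  have hL0 : (0 : ℝ) < L := by linarith
  have hLα : (0 : ℝ) < L ^ α := Real.rpow_pos_of_pos hL0 α
  have hii : Real.exp α ≤ Real.sqrt X / L ^ α := exp_le_sqrt_div_log hα0 hX
  set Kr : ℝ := Real.sqrt X / (2 * L ^ α) with hKr
  have hKr0 : 0 ≤ Kr := by positivity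
  set K : ℕ := ⌊Kr⌋₊ with hK
  set T : ℕ → Finset ℕ := fun k =>
    (bernoulli (2 * k)).num.natAbs.primeFactors.filter (fun p => 4 * k ^ 2 < p) with hT
  have hsub : (Finset.range (⌊X⌋₊ + 1)).filter
      (fun p : ℕ => p.Prime ∧ (p : ℝ) ≤ X ∧ ¬ IsMRegular (Mfloor α p) p)
      ⊆ (Finset.Icc 1 K).biUnion T := by
    intro p hp
    obtain ⟨-, hprime, hpX, hirr⟩ := Finset.mem_filter.mp hp
    rw [IsMRegular] at hirr
    push_neg at hirr
    obtain ⟨k, h2k, hmink, hdvd⟩ := hirr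
    have hk1 : 1 ≤ k := by omega
    obtain ⟨hMf, hp3⟩ := le_min_iff.mp hmink
    have hp5 : 5 ≤ p := by omega
    have hppos : (0 : ℝ) < (p : ℝ) := by positivity
    have hp5R : (5 : ℝ) ≤ (p : ℝ) := by exact_mod_cast hp5
    have hplog : 1 < Real.log p := by
      rw [show (1:ℝ) = Real.log (Real.exp 1) by rw [Real.log_exp]]
      apply Real.log_lt_log (Real.exp_pos _)
      calc Real.exp 1 < 2.7182818286 := Real.exp_one_lt_d9
        _ ≤ (p : ℝ) := by linarith
    have hplog0 : 0 < Real.log p := by linarith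
    have hPpos : (0 : ℝ) < Real.log p ^ α := Real.rpow_pos_of_pos hplog0 α
    have hfp : (2 * k : ℝ) ≤ Real.sqrt p / Real.log p ^ α := by
      calc (2 * k : ℝ) = ((2 * k : ℕ) : ℝ) := by push_cast; ring
        _ ≤ ((Mfloor α p : ℕ) : ℝ) := by exact_mod_cast hMf
        _ ≤ Real.sqrt p / Real.log p ^ α := by
          rw [Mfloor]
          exact Nat.floor_le (by positivity)
    have h4k2 : 4 * k ^ 2 < p := by
      have hpow1 : 1 < Real.log p ^ α :=
        Real.one_lt_rpow_iff hplog0.le |>.mpr (Or.inl ⟨hplog, hα0⟩)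
      have hmul : (2 * k : ℝ) * Real.log p ^ α ≤ Real.sqrt p :=
        (le_div_iff₀ hPpos).mp hfp
      have hsq : ((2 * k : ℝ) * Real.log p ^ α) ^ 2 ≤ (p : ℝ) := by
        have h0 : (0:ℝ) ≤ (2 * k : ℝ) * Real.log p ^ α := by positivity
        have := pow_le_pow_left₀ h0 hmul 2
        rwa [Real.sq_sqrt hppos.le] at this
      have hkR : (1 : ℝ) ≤ (k : ℝ) := by exact_mod_cast hk1
      have h4 : (0:ℝ) < 4 * (k:ℝ)^2 := by positivity
      have hP2 : 1 < (Real.log (p:ℝ) ^ α)^2 := by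
        have h00 : (0:ℝ) < Real.log (p:ℝ) ^ α := hPpos
        nlinarith
      have h5 : 4*(k:ℝ)^2 * 1 < 4*(k:ℝ)^2 * (Real.log (p:ℝ) ^ α)^2 :=
        mul_lt_mul_of_pos_left hP2 h4
      have hgoal : (4 * k ^ 2 : ℝ) < (p : ℝ) := by nlinarith [hsq]
      exact_mod_cast hgoal
    have hpT : p ∈ T k := by
      rw [hT]
      refine Finset.mem_filter.mpr ⟨Nat.mem_primeFactors.mpr ⟨hprime, ?_, ?_⟩, h4k2⟩
      · have := Int.natAbs_dvd_natAbs.mpr hdvd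
        simpa using this
      · simp only [Int.natAbs_ne_zero, Rat.num_ne_zero]
        exact (bernoulli_size hk1).1
    have h2kX : (2 * k : ℝ) ≤ Real.sqrt X / L ^ α := by
      by_cases hcase : (p : ℝ) ≤ Real.exp (2 * α)
      · have hP1 : 1 ≤ Real.log p ^ α := Real.one_le_rpow hplog.le hα0.le
        have h1 : (2 * k : ℝ) ≤ Real.sqrt p :=
          hfp.trans (div_le_self (Real.sqrt_nonneg _) hP1)
        have h2 : Real.sqrt (p : ℝ) ≤ Real.exp α := by
          calc Real.sqrt (p : ℝ) ≤ Real.sqrt (Real.exp (2 * α)) := Real.sqrt_le_sqrt hcase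
            _ = Real.exp α := by
              rw [show Real.exp (2 * α) = Real.exp α ^ 2 by
                rw [sq, ← Real.exp_add]; ring_nf, Real.sqrt_sq (Real.exp_pos _).le]
        linarith [hii]
      · push_neg at hcase
        exact hfp.trans (sqrt_div_log_mono hα0 hcase.le hpX)
    refine Finset.mem_biUnion.mpr ⟨k, Finset.mem_Icc.mpr ⟨hk1, ?_⟩, hpT⟩
    rw [hK]
    refine Nat.le_floor ?_
    rw [hKr]
    rw [le_div_iff₀ (by positivity)]
    rw [le_div_iff₀ hLα] at h2kX
    push_cast
    nlinarith [hLα]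
  -- now count
  have hcard1 : ((Finset.range (⌊X⌋₊ + 1)).filter
      (fun p : ℕ => p.Prime ∧ (p : ℝ) ≤ X ∧ ¬ IsMRegular (Mfloor α p) p)).card
      ≤ 6 * K ^ 2 := by
    calc _ ≤ ((Finset.Icc 1 K).biUnion T).card := Finset.card_le_card hsub
      _ ≤ ∑ k ∈ Finset.Icc 1 K, (T k).card := Finset.card_biUnion_le
      _ ≤ ∑ k ∈ Finset.Icc 1 K, 6 * K := by
          refine Finset.sum_le_sum fun k hk => ?_
          obtain ⟨hk1, hkK⟩ := Finset.mem_Icc.mp hk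
          exact (count_irregular hk1).trans (by omega)
      _ = 6 * K ^ 2 := by
          rw [Finset.sum_const, Nat.card_Icc]
          simp [sq]; ring
  have hKle : (K : ℝ) ≤ Kr := Nat.floor_le hKr0
  have hL2 : (0:ℝ) < L ^ (2 * α) := Real.rpow_pos_of_pos hL0 _
  have hKr2 : Kr ^ 2 = X / (4 * L ^ (2 * α)) := by
    rw [hKr, div_pow, mul_pow, Real.sq_sqrt hXpos.le]
    have h1 : (L ^ α) ^ 2 = L ^ (2 * α) := by
      rw [← Real.rpow_natCast (L ^ α) 2, ← Real.rpow_mul hL0.le]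
      norm_num [mul_comm]
    rw [h1]
    norm_num
  have hXL : 0 ≤ X / L ^ (2 * α) := div_nonneg hXpos.le hL2.le
  calc (((Finset.range (⌊X⌋₊ + 1)).filter
      (fun p : ℕ => p.Prime ∧ (p : ℝ) ≤ X ∧ ¬ IsMRegular (Mfloor α p) p)).card : ℝ)
      ≤ ((6 * K ^ 2 : ℕ) : ℝ) := by exact_mod_cast hcard1
    _ = 6 * (K : ℝ) ^ 2 := by push_cast; ring
    _ ≤ 6 * Kr ^ 2 := by nlinarith [show (0:ℝ) ≤ (K:ℝ) from Nat.cast_nonneg K]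
    _ = 6 * (X / (4 * L ^ (2 * α))) := by rw [hKr2]
    _ = (3 / 2) * (X / L ^ (2 * α)) := by ring
    _ ≤ 10 * (X / L ^ (2 * α)) := by linarith
    _ = 10 * X / L ^ (2 * α) := by ring
end
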